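/- Let H be a complex Hilbert space, T a bounded linear operator on H, and v ∈ H. Let P be the orthogonal projection of H onto [Tv], the closed linear span of {T^n v : n ≥ 1}. Then (a) for every n ≥ 1 one has ⟪v − P v, T^n (v − P v)⟫ = 0, so that v − P v is T-inner or zero; and (b) if v satisfies ⟪v, T^n v⟫ = 0 for all n ≥ 1, then P v = 0, so v = v − P v; hence every T-inner vector arises as w − P_{[Tw]} w for some w ∈ H. -/

import Mathlib

open scoped ComplexInnerProductSpace

/-- The closed linear span of `{T^n v : n ≥ 1}`. -/
abbrev cyclicSpanTv {H : Type*} [NormedAddCommGroup H] [InnerProductSpace ℂ H]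
    (T : H →L[ℂ] H) (v : H) : Submodule ℂ H :=
  (Submodule.span ℂ {x | ∃ n : ℕ, 1 ≤ n ∧ x = (T ^ n) v}).topologicalClosure

/-- `P v`, the orthogonal projection of `v` onto `[Tv]`. -/
noncomputable def projTv {H : Type*} [NormedAddCommGroup H] [InnerProductSpace ℂ H]
    [CompleteSpace H] (T : H →L[ℂ] H) (v : H) : H :=
  ((cyclicSpanTv T v).orthogonalProjection v : H)

/-- Proposition (Cheng–Mashreghi–Ross): `v − P v` is `T`-inner (or zero), and every
`T`-inner vector arises this way (a `T`-inner `v` satisfies `P v = 0`, so `v = v − P v`). -/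
theorem stmt0 {H : Type*} [NormedAddCommGroup H] [InnerProductSpace ℂ H] [CompleteSpace H]
    (T : H →L[ℂ] H) (v : H) :
    (∀ n : ℕ, 1 ≤ n → ⟪v - projTv T v, (T ^ n) (v - projTv T v)⟫ = 0) ∧
      ((∀ n : ℕ, 1 ≤ n → ⟪v, (T ^ n) v⟫ = 0) → projTv T v = 0) := by
  set S : Set H := {x | ∃ n : ℕ, 1 ≤ n ∧ x = (T ^ n) v} with hS
  set M : Submodule ℂ H := cyclicSpanTv T v with hM
  -- M is T-invariant
  have hTinv : ∀ x ∈ M, T x ∈ M := by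
    intro x hx
    have hle : Submodule.span ℂ S ≤ (M.comap (T : H →ₗ[ℂ] H)) := by
      rw [Submodule.span_le]
      rintro y ⟨n, hn, rfl⟩
      have : T ((T ^ n) v) = (T ^ (n + 1)) v := by
        rw [pow_succ']; rfl
      have hmem : (T ^ (n + 1)) v ∈ M :=
        Submodule.le_topologicalClosure _ (Submodule.subset_span ⟨n + 1, by omega, rfl⟩)
      show T ((T ^ n) v) ∈ M
      rw [this]; exact hmem
    have hclosed : IsClosed ((M.comap (T : H →ₗ[ℂ] H)) : Set H) := by
      have : ((M.comap (T : H →ₗ[ℂ] H)) : Set H) = T ⁻¹' (M : Set H) := rfl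
      rw [this]
      exact (Submodule.isClosed_topologicalClosure _).preimage T.continuous
    exact Submodule.topologicalClosure_minimal _ hle hclosed hx
  have hTninv : ∀ (n : ℕ) (x), x ∈ M → (T ^ n) x ∈ M := by
    intro n
    induction n with
    | zero => simp
    | succ k ih =>
      intro x hx
      rw [pow_succ']
      exact hTinv _ (ih _ hx)
  constructor
  · intro n hn
    have hmem : (T ^ n) (v - projTv T v) ∈ M := by
      have h1 : (T ^ n) v ∈ M :=
        Submodule.le_topologicalClosure _ (Submodule.subset_span ⟨n, hn, rfl⟩)
      have h2 : (T ^ n) (projTv T v) ∈ M :=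
        hTninv n _ (M.orthogonalProjection v).2
      rw [map_sub]
      exact Submodule.sub_mem _ h1 h2
    have horth : v - projTv T v ∈ Mᗮ := Submodule.sub_starProjection_mem_orthogonal (K := M) v
    have := (Submodule.mem_orthogonal M (v - projTv T v)).mp horth _ hmem
    rw [← inner_conj_symm, this, map_zero]
  · intro hv
    have : v ∈ Mᗮ := by
      have hle : Submodule.span ℂ S ≤ (ℂ ∙ v)ᗮ := by
        rw [Submodule.span_le]
        rintro y ⟨n, hn, rfl⟩
        rw [SetLike.mem_coe, Submodule.mem_orthogonal_singleton_iff_inner_left,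
          ← inner_conj_symm, hv n hn, map_zero]
      have hMle : M ≤ (ℂ ∙ v)ᗮ :=
        Submodule.topologicalClosure_minimal _ hle (Submodule.isClosed_orthogonal _)
      rw [Submodule.mem_orthogonal]
      intro u hu
      exact Submodule.mem_orthogonal_singleton_iff_inner_left.mp (hMle hu)
    have h0 : M.orthogonalProjection v = 0 := Submodule.orthogonalProjectionOnto_eq_zero_iff.mpr this
    simp [projTv, ← hM, h0, Submodule.starProjection_apply]
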